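/- Let $\mu$ be a Borel probability measure on the space of polytopes $\mathcal{P}^n$ with bounded support and let $K$ be the macroid with $h_K = \int h_P \, \mu(dP)$. Then for every unit vector $u$, the support set $F(K, u)$ satisfies $h_{F(K,u)} = \int h_{F(P,u)} \, \mu(dP)$. -/

import Mathlib

open scoped Pointwise RealInnerProductSpace
open MeasureTheory

set_option maxHeartbeats 1000000
set_option synthInstance.maxHeartbeats 200000

noncomputable section

/-- Support function of a set. -/
def sfnS {n : ℕ} (A : Set (EuclideanSpace ℝ (Fin n))) (u : EuclideanSpace ℝ (Fin n)) : ℝ :=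
  sSup ((fun x => ⟪x, u⟫) '' A)

/-- Support function of a convex body. -/
def sfn {n : ℕ} (K : ConvexBody (EuclideanSpace ℝ (Fin n))) (u : EuclideanSpace ℝ (Fin n)) : ℝ :=
  sfnS (K : Set (EuclideanSpace ℝ (Fin n))) u

/-- The support set `F(K, u)` of a convex body `K` in direction `u`. -/
def suppSet {n : ℕ} (K : ConvexBody (EuclideanSpace ℝ (Fin n))) (u : EuclideanSpace ℝ (Fin n)) :
    Set (EuclideanSpace ℝ (Fin n)) :=
  {x ∈ (K : Set (EuclideanSpace ℝ (Fin n))) | ⟪x, u⟫ = sfn K u}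

/-- The support of a measure on a topological space. -/
def msupport {X : Type*} [TopologicalSpace X] [MeasurableSpace X] (μ : Measure X) : Set X :=
  {x | ∀ U : Set X, IsOpen U → x ∈ U → μ U ≠ 0}

/-- The class of polytopes. -/
def Polytopes (n : ℕ) : Set (ConvexBody (EuclideanSpace ℝ (Fin n))) :=
  {P | ∃ s : Finset (EuclideanSpace ℝ (Fin n)),
    (P : Set (EuclideanSpace ℝ (Fin n))) = convexHull ℝ ↑s}

namespace SuppAux

open Filter Topology

variable {n : ℕ}

local notation "E" => EuclideanSpace ℝ (Fin n)

lemma inner_cont (v : E) : Continuous (fun x : E => ⟪x, v⟫) :=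
  Continuous.inner continuous_id continuous_const

lemma sfn_isGreatest (K : ConvexBody E) (v : E) :
    IsGreatest ((fun x => ⟪x, v⟫) '' (K : Set E)) (sfn K v) := by
  have hc : IsCompact ((fun x : E => ⟪x, v⟫) '' (K : Set E)) :=
    K.isCompact.image (inner_cont v)
  have hne : ((fun x : E => ⟪x, v⟫) '' (K : Set E)).Nonempty := K.nonempty.image _
  exact ⟨hc.sSup_mem hne, fun a ha => le_csSup hc.bddAbove ha⟩

lemma exists_sfn_max (K : ConvexBody E) (v : E) :
    ∃ y ∈ (K : Set E), ⟪y, v⟫ = sfn K v := by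
  obtain ⟨y, hy, hyv⟩ := (sfn_isGreatest K v).1
  exact ⟨y, hy, hyv⟩

lemma inner_le_sfn (K : ConvexBody E) (v : E) {y : E} (hy : y ∈ (K : Set E)) :
    ⟪y, v⟫ ≤ sfn K v :=
  (sfn_isGreatest K v).2 ⟨y, hy, rfl⟩

lemma sfn_le (K : ConvexBody E) (v : E) {c : ℝ} (h : ∀ y ∈ (K : Set E), ⟪y, v⟫ ≤ c) :
    sfn K v ≤ c :=
  csSup_le (K.nonempty.image _) (by rintro a ⟨y, hy, rfl⟩; exact h y hy)

lemma suppSet_nonempty (K : ConvexBody E) (u : E) : (suppSet K u).Nonempty := by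
  obtain ⟨y, hy, hyu⟩ := exists_sfn_max K u
  exact ⟨y, hy, hyu⟩

lemma suppSet_bddAbove (K : ConvexBody E) (u x : E) :
    BddAbove ((fun y : E => ⟪y, x⟫) '' suppSet K u) := by
  refine (K.isCompact.image (inner_cont x)).bddAbove.mono (Set.image_mono ?_)
  exact fun y hy => hy.1

lemma inner_le_sfnS_suppSet (K : ConvexBody E) (u x : E) {y : E} (hy : y ∈ suppSet K u) :
    ⟪y, x⟫ ≤ sfnS (suppSet K u) x :=
  le_csSup (suppSet_bddAbove K u x) ⟨y, hy, rfl⟩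

lemma sfnS_suppSet_le (K : ConvexBody E) (u x : E) {c : ℝ}
    (h : ∀ y ∈ suppSet K u, ⟪y, x⟫ ≤ c) : sfnS (suppSet K u) x ≤ c :=
  csSup_le ((suppSet_nonempty K u).image _) (by rintro a ⟨y, hy, rfl⟩; exact h y hy)

lemma sfnS_suppSet_le_q (K : ConvexBody E) (u x : E) {t : ℝ} (ht : 0 < t) :
    sfnS (suppSet K u) x ≤ (sfn K (u + t • x) - sfn K u) / t := by
  refine sfnS_suppSet_le K u x ?_
  rintro z ⟨hzK, hzu⟩
  rw [le_div_iff₀ ht]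
  have h1 : ⟪z, u + t • x⟫ ≤ sfn K (u + t • x) := inner_le_sfn K _ hzK
  have h2 : ⟪z, u + t • x⟫ = ⟪z, u⟫ + t * ⟪z, x⟫ := by
    rw [inner_add_right, real_inner_smul_right]
  rw [h2, hzu] at h1
  linarith

/-- Key lemma: the difference quotients of the support function converge to the
support function of the support set. -/
lemma tendsto_q (K : ConvexBody E) (u x : E) (t : ℕ → ℝ) (ht : ∀ k, 0 < t k)
    (hlim : Tendsto t atTop (𝓝 0)) :
    Tendsto (fun k => (sfn K (u + t k • x) - sfn K u) / t k) atTop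
      (𝓝 (sfnS (suppSet K u) x)) := by
  set S := sfnS (suppSet K u) x with hS
  apply tendsto_of_subseq_tendsto
  intro ns hns
  have hex : ∀ k : ℕ, ∃ y ∈ (K : Set E), ⟪y, u + t (ns k) • x⟫ = sfn K (u + t (ns k) • x) :=
    fun k => exists_sfn_max K _
  choose y hyK hymax using hex
  obtain ⟨yL, hyLK, ms, hms, hconv⟩ := K.isCompact.tendsto_subseq hyK
  refine ⟨ms, ?_⟩
  set s : ℕ → ℝ := fun j => t (ns (ms j)) with hsdef
  have hs0 : ∀ j, 0 < s j := fun j => ht _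
  have hslim : Tendsto s atTop (𝓝 0) := hlim.comp (hns.comp hms.tendsto_atTop)
  have hyconv : Tendsto (fun j => y (ms j)) atTop (𝓝 yL) := hconv
  -- yL is in the support set
  have hinner_u : Tendsto (fun j => ⟪y (ms j), u⟫) atTop (𝓝 ⟪yL, u⟫) :=
    hyconv.inner tendsto_const_nhds
  have hinner_x : Tendsto (fun j => ⟪y (ms j), x⟫) atTop (𝓝 ⟪yL, x⟫) :=
    hyconv.inner tendsto_const_nhds
  have hinner_full : Tendsto (fun j => ⟪y (ms j), u + s j • x⟫) atTop (𝓝 ⟪yL, u⟫) := by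
    have : (fun j => ⟪y (ms j), u + s j • x⟫) =
        fun j => ⟪y (ms j), u⟫ + s j * ⟪y (ms j), x⟫ := by
      funext j; rw [inner_add_right, real_inner_smul_right]
    rw [this]
    have h2 : Tendsto (fun j => s j * ⟪y (ms j), x⟫) atTop (𝓝 0) := by
      have := hslim.mul hinner_x; simpa using this
    simpa using hinner_u.add h2
  have hyLu_ge : sfn K u ≤ ⟪yL, u⟫ := by
    refine sfn_le K u ?_
    intro z hz
    have hle : ∀ j, ⟪z, u + s j • x⟫ ≤ ⟪y (ms j), u + s j • x⟫ := by
      intro j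
      rw [hymax (ms j)]
      exact inner_le_sfn K _ hz
    have hzlim : Tendsto (fun j => ⟪z, u + s j • x⟫) atTop (𝓝 ⟪z, u⟫) := by
      have : (fun j => ⟪z, u + s j • x⟫) = fun j => ⟪z, u⟫ + s j * ⟪z, x⟫ := by
        funext j; rw [inner_add_right, real_inner_smul_right]
      rw [this]
      have h2 : Tendsto (fun j => s j * ⟪z, x⟫) atTop (𝓝 0) := by
        have := hslim.mul_const ⟪z, x⟫; simpa using this
      simpa using (tendsto_const_nhds (x := ⟪z, u⟫)).add h2
    exact le_of_tendsto_of_tendsto' hzlim hinner_full hle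
  have hyLsupp : yL ∈ suppSet K u :=
    ⟨hyLK, le_antisymm (inner_le_sfn K u hyLK) hyLu_ge⟩
  -- upper bound on quotients along the subsequence
  have hq_le : ∀ j, (sfn K (u + s j • x) - sfn K u) / s j ≤ ⟪y (ms j), x⟫ := by
    intro j
    rw [div_le_iff₀ (hs0 j)]
    have h1 : sfn K (u + s j • x) = ⟪y (ms j), u⟫ + s j * ⟪y (ms j), x⟫ := by
      rw [← hymax (ms j), inner_add_right, real_inner_smul_right]
    have h2 : ⟪y (ms j), u⟫ ≤ sfn K u := inner_le_sfn K u (hyK (ms j))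
    rw [h1]; linarith [mul_comm (s j) ⟪y (ms j), x⟫]
  have hq_ge : ∀ j, S ≤ (sfn K (u + s j • x) - sfn K u) / s j :=
    fun j => sfnS_suppSet_le_q K u x (hs0 j)
  -- the limit of the upper bounds is S
  have hyLx_le : ⟪yL, x⟫ ≤ S := inner_le_sfnS_suppSet K u x hyLsupp
  have hyLx_ge : S ≤ ⟪yL, x⟫ := by
    refine le_of_tendsto_of_tendsto' tendsto_const_nhds hinner_x ?_
    intro j; exact (hq_ge j).trans (hq_le j)
  have hyLx : ⟪yL, x⟫ = S := le_antisymm hyLx_le hyLx_ge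
  have hlim2 : Tendsto (fun j => ⟪y (ms j), x⟫) atTop (𝓝 S) := hyLx ▸ hinner_x
  exact tendsto_of_tendsto_of_tendsto_of_le_of_le tendsto_const_nhds hlim2 hq_ge hq_le

lemma sfn_le_sfn_add_dist (P Q : ConvexBody E) (v : E) :
    sfn P v ≤ sfn Q v + dist P Q * ‖v‖ := by
  refine sfn_le P v ?_
  intro y hy
  have h1 : Metric.infDist y (Q : Set E) ≤ Metric.hausdorffDist (P : Set E) (Q : Set E) :=
    Metric.infDist_le_hausdorffDist_of_mem hy ConvexBody.hausdorffEdist_ne_top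
  obtain ⟨z, hz, hdz⟩ := Q.isCompact.exists_infDist_eq_dist Q.nonempty y
  have hd : dist y z ≤ dist P Q := by
    rw [← hdz]; rw [ConvexBody.hausdorffDist_coe] at h1; exact h1
  have h2 : ⟪y, v⟫ = ⟪z, v⟫ + ⟪y - z, v⟫ := by rw [inner_sub_left]; ring
  have h3 : ⟪y - z, v⟫ ≤ ‖y - z‖ * ‖v‖ := real_inner_le_norm _ _
  have h4 : ‖y - z‖ = dist y z := (dist_eq_norm y z).symm
  have h5 : ⟪z, v⟫ ≤ sfn Q v := inner_le_sfn Q v hz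
  have h6 : dist y z * ‖v‖ ≤ dist P Q * ‖v‖ :=
    mul_le_mul_of_nonneg_right hd (norm_nonneg v)
  rw [h2]; rw [h4] at h3; linarith

lemma sfn_lipschitz (v : E) : LipschitzWith ‖v‖₊ (fun P : ConvexBody E => sfn P v) := by
  refine LipschitzWith.of_dist_le_mul fun P Q => ?_
  rw [Real.dist_eq, abs_sub_le_iff, coe_nnnorm]
  constructor
  · have := sfn_le_sfn_add_dist P Q v; nlinarith [dist_nonneg (x := P) (y := Q)]
  · have := sfn_le_sfn_add_dist Q P v
    rw [dist_comm] at this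
    nlinarith [dist_nonneg (x := P) (y := Q)]

lemma sfn_continuous (v : E) : Continuous (fun P : ConvexBody E => sfn P v) :=
  (sfn_lipschitz v).continuous

lemma abs_sfn_le {K : ConvexBody E} {R : ℝ} (hR : ∀ y ∈ (K : Set E), ‖y‖ ≤ R) (v : E) :
    |sfn K v| ≤ R * ‖v‖ := by
  rw [abs_le]
  obtain ⟨y₀, hy₀⟩ := K.nonempty
  constructor
  · have h1 : -(R * ‖v‖) ≤ ⟪y₀, v⟫ := by
      have := real_inner_le_norm y₀ (-v)
      have h2 : ‖y₀‖ * ‖v‖ ≤ R * ‖v‖ :=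
        mul_le_mul_of_nonneg_right (hR y₀ hy₀) (norm_nonneg v)
      simp only [inner_neg_right, norm_neg] at this
      linarith
    exact h1.trans (inner_le_sfn K v hy₀)
  · refine sfn_le K v ?_
    intro y hy
    have := real_inner_le_norm y v
    have h2 : ‖y‖ * ‖v‖ ≤ R * ‖v‖ := mul_le_mul_of_nonneg_right (hR y hy) (norm_nonneg v)
    linarith

lemma sfn_lipschitz_v {K : ConvexBody E} {R : ℝ} (hR : ∀ y ∈ (K : Set E), ‖y‖ ≤ R)
    (v w : E) : sfn K v - sfn K w ≤ R * ‖v - w‖ := by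
  obtain ⟨y, hy, hyv⟩ := exists_sfn_max K v
  have h1 : ⟪y, v⟫ = ⟪y, w⟫ + ⟪y, v - w⟫ := by rw [inner_sub_right]; ring
  have h2 : ⟪y, v - w⟫ ≤ ‖y‖ * ‖v - w‖ := real_inner_le_norm _ _
  have h3 : ‖y‖ * ‖v - w‖ ≤ R * ‖v - w‖ :=
    mul_le_mul_of_nonneg_right (hR y hy) (norm_nonneg _)
  have h4 : ⟪y, w⟫ ≤ sfn K w := inner_le_sfn K w hy
  rw [← hyv, h1]; linarith

lemma abs_q_le {K : ConvexBody E} {R : ℝ} (hR : ∀ y ∈ (K : Set E), ‖y‖ ≤ R)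
    (u x : E) {t : ℝ} (ht : 0 < t) :
    |(sfn K (u + t • x) - sfn K u) / t| ≤ R * ‖x‖ := by
  rw [abs_div, abs_of_pos ht, div_le_iff₀ ht]
  have key : ∀ v w : E, sfn K v - sfn K w ≤ R * ‖v - w‖ := sfn_lipschitz_v hR
  have h1 := key (u + t • x) u
  have h2 := key u (u + t • x)
  have h3 : ‖(u + t • x) - u‖ = t * ‖x‖ := by
    rw [add_sub_cancel_left, norm_smul, Real.norm_eq_abs, abs_of_pos ht]
  have h4 : ‖u - (u + t • x)‖ = t * ‖x‖ := by
    rw [← norm_neg]; simp only [neg_sub]; exact h3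
  rw [h3] at h1; rw [h4] at h2
  rw [abs_le]
  constructor <;> nlinarith

lemma msupport_compl_null {X : Type*} [TopologicalSpace X] [MeasurableSpace X]
    [SecondCountableTopology X] (μ : Measure X) :
    μ (msupport μ)ᶜ = 0 := by
  obtain ⟨b, hbc, -, hb⟩ := TopologicalSpace.exists_countable_basis X
  have hN : μ (⋃₀ {U ∈ b | μ U = 0}) = 0 := by
    rw [measure_sUnion_null_iff (hbc.mono (Set.sep_subset _ _))]
    exact fun s hs => hs.2
  refine measure_mono_null ?_ hN
  intro x hx
  simp only [Set.mem_compl_iff, msupport, Set.mem_setOf_eq, not_forall] at hx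
  obtain ⟨U, hUo, hxU, hU0⟩ := hx
  push_neg at hU0
  obtain ⟨B, hBb, hxB, hBU⟩ := hb.exists_subset_of_mem_open hxU hUo
  exact ⟨B, ⟨hBb, measure_mono_null hBU (by simpa using hU0)⟩, hxB⟩

def toNC (K : ConvexBody E) : TopologicalSpace.NonemptyCompacts (EuclideanSpace ℝ (Fin n)) :=
  ⟨⟨(K : Set (EuclideanSpace ℝ (Fin n))), K.isCompact⟩, K.nonempty⟩

lemma convexBody_secondCountable :
    SecondCountableTopology (ConvexBody E) := by
  have hiso : Isometry (toNC (n := n)) := by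
    refine Isometry.of_dist_eq fun K L => ?_
    rw [Metric.NonemptyCompacts.dist_eq]
    exact ConvexBody.hausdorffDist_coe K L
  exact hiso.isEmbedding.secondCountableTopology

end SuppAux

open SuppAux Filter Topology

theorem supportSet_of_macroid {n : ℕ}
    [MeasurableSpace (ConvexBody (EuclideanSpace ℝ (Fin n)))]
    [BorelSpace (ConvexBody (EuclideanSpace ℝ (Fin n)))]
    (μ : Measure (ConvexBody (EuclideanSpace ℝ (Fin n)))) [IsProbabilityMeasure μ]
    (hconc : μ (Polytopes n)ᶜ = 0)
    (hbd : Bornology.IsBounded (Polytopes n ∩ msupport μ))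
    (K : ConvexBody (EuclideanSpace ℝ (Fin n)))
    (hK : ∀ u, sfn K u = ∫ P, sfn P u ∂μ) :
    ∀ u : EuclideanSpace ℝ (Fin n), ‖u‖ = 1 →
      ∀ x, sfnS (suppSet K u) x = ∫ P, sfnS (suppSet P u) x ∂μ := by
  intro u _ x
  haveI : SecondCountableTopology (ConvexBody (EuclideanSpace ℝ (Fin n))) :=
    convexBody_secondCountable
  set S : Set (ConvexBody (EuclideanSpace ℝ (Fin n))) := Polytopes n ∩ msupport μ with hSdef
  -- a.e. P lies in S
  have hae : ∀ᵐ P ∂μ, P ∈ S := by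
    have h1 : μ Sᶜ = 0 := by
      rw [hSdef, Set.compl_inter]
      exact measure_union_null hconc (msupport_compl_null μ)
    rw [MeasureTheory.ae_iff]
    exact h1
  -- S is nonempty
  have hSne : S.Nonempty := by
    by_contra h
    rw [Set.not_nonempty_iff_eq_empty] at h
    rw [h] at hae
    simp only [ae_iff, Set.mem_empty_iff_false, not_false_iff] at hae
    have h2 : μ Set.univ = 0 := by simpa using hae
    simp [measure_univ] at h2
  obtain ⟨P₀, hP₀⟩ := hSne
  -- uniform norm bound R on bodies in S
  obtain ⟨C, hC⟩ : ∃ C, ∀ P ∈ S, dist P P₀ ≤ C := by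
    obtain ⟨r, hr⟩ := hbd.subset_closedBall P₀
    exact ⟨r, fun P hP => hr hP⟩
  obtain ⟨M, hM⟩ : ∃ M, ∀ z ∈ (P₀ : Set (EuclideanSpace ℝ (Fin n))), ‖z‖ ≤ M := by
    obtain ⟨M, hM⟩ := P₀.isCompact.isBounded.subset_closedBall 0
    exact ⟨M, fun z hz => by simpa using hM hz⟩
  set R : ℝ := C + M with hRdef
  have hRbound : ∀ P ∈ S, ∀ y ∈ (P : Set (EuclideanSpace ℝ (Fin n))), ‖y‖ ≤ R := by
    intro P hP y hy
    have h1 : Metric.infDist y (P₀ : Set (EuclideanSpace ℝ (Fin n)))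
        ≤ Metric.hausdorffDist (P : Set (EuclideanSpace ℝ (Fin n)))
          (P₀ : Set (EuclideanSpace ℝ (Fin n))) :=
      Metric.infDist_le_hausdorffDist_of_mem hy ConvexBody.hausdorffEdist_ne_top
    obtain ⟨z, hz, hdz⟩ := P₀.isCompact.exists_infDist_eq_dist P₀.nonempty y
    have h2 : dist y z ≤ C := by
      rw [← hdz]
      rw [ConvexBody.hausdorffDist_coe] at h1
      exact h1.trans (hC P hP)
    calc ‖y‖ ≤ ‖z‖ + dist y z := by
            have h := norm_add_le (y - z) z
            rw [sub_add_cancel] at h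
            rw [dist_eq_norm]
            linarith
      _ ≤ M + C := add_le_add (hM z hz) h2
      _ = R := by rw [hRdef]; ring
  -- the sequence of difference quotients
  set t : ℕ → ℝ := fun k => 1 / (k + 1 : ℝ) with htdef
  have ht0 : ∀ k, 0 < t k := fun k => by positivity
  have htlim : Tendsto t atTop (𝓝 0) := tendsto_one_div_add_atTop_nhds_zero_nat
  set g : ℕ → ConvexBody (EuclideanSpace ℝ (Fin n)) → ℝ :=
    fun k P => (sfn P (u + t k • x) - sfn P u) / t k with hgdef
  -- measurability
  have hmeas : ∀ k, AEStronglyMeasurable (g k) μ := by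
    intro k
    exact (((sfn_continuous (u + t k • x)).sub (sfn_continuous u)).div_const
      (t k)).aestronglyMeasurable
  -- integrability of sfn · v
  have hint : ∀ v : EuclideanSpace ℝ (Fin n),
      Integrable (fun P : ConvexBody (EuclideanSpace ℝ (Fin n)) => sfn P v) μ := by
    intro v
    refine Integrable.mono' (integrable_const (R * ‖v‖)) (sfn_continuous v).aestronglyMeasurable ?_
    filter_upwards [hae] with P hP
    rw [Real.norm_eq_abs]
    exact abs_sfn_le (hRbound P hP) v
  -- dominated convergence
  have hdom : Tendsto (fun k => ∫ P, g k P ∂μ) atTop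
      (𝓝 (∫ P, sfnS (suppSet P u) x ∂μ)) := by
    refine tendsto_integral_of_dominated_convergence (fun _ => R * ‖x‖) hmeas
      (integrable_const _) ?_ ?_
    · intro k
      filter_upwards [hae] with P hP
      rw [Real.norm_eq_abs]
      exact abs_q_le (hRbound P hP) u x (ht0 k)
    · filter_upwards with P
      exact tendsto_q P u x t ht0 htlim
  -- identification of the integrals of g k
  have hgint : ∀ k, ∫ P, g k P ∂μ = (sfn K (u + t k • x) - sfn K u) / t k := by
    intro k
    rw [hgdef]
    simp only
    rw [integral_div, integral_sub (hint (u + t k • x)) (hint u), ← hK, ← hK]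
  rw [funext hgint] at hdom
  exact tendsto_nhds_unique (tendsto_q K u x t ht0 htlim) hdom
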